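/- arXiv:1112.4875 — 2 statements merged into one kernel-verified Lean document; each statement's English description precedes it below -/
import Mathlib

section
/- Let p, q, r ∈ (1,∞) satisfy 1/p + 1/q + 1/r = 2, and let d ≥ 1. There exist C < ∞ and γ > 0, depending only on (p,q,r), such that for any measurable sets E, E' ⊂ ℝ^d with positive and finite Lebesgue measures, ‖1_E * 1_{E'}‖_{r'} ≤ C · min(|E|/|E'|, |E'|/|E|)^γ · |E|^{1/p} |E'|^{1/q}, where r' = r/(r−1). -/
open MeasureTheory Filter Metric Set
open scoped ENNReal NNReal
noncomputable section

/-- ℝ^d as Euclidean space. -/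
abbrev Ed (d : ℕ) := EuclideanSpace ℝ (Fin d)

/-- Convolution of real-valued functions on ℝ^d. -/
def conv {d : ℕ} (f g : Ed d → ℝ) : Ed d → ℝ := fun x => ∫ y, f (x - y) * g y

/-- The L^s(ℝ^d) norm (real-valued). -/
def nrm {d : ℕ} (s : ℝ) (f : Ed d → ℝ) : ℝ := (eLpNorm f (ENNReal.ofReal s) volume).toReal

lemma aux1 (p q r γ a b : ℝ)
    (hpqr : 1/p + 1/q + 1/r = 2) (hγ : γ + 1/p ≤ 1)
    (ha : 0 < a) (hb : 0 < b) (hab : a ≤ b) :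
    a * b ^ (1 - 1/r) ≤ (a/b) ^ γ * a ^ (1/p) * b ^ (1/q) := by
  have ht0 : 0 < a / b := div_pos ha hb
  have ht1 : a / b ≤ 1 := (div_le_one hb).2 hab
  have key : (a/b) ^ (1:ℝ) ≤ (a/b) ^ (γ + 1/p) :=
    Real.rpow_le_rpow_of_exponent_ge ht0 ht1 hγ
  have hb1 : b ^ (1/p + 1/q) = b * b ^ (1 - 1/r) := by
    rw [show (1/p+1/q : ℝ) = 1 + (1-1/r) by linarith, Real.rpow_add hb, Real.rpow_one]
  have ha' : (a/b) * b = a := div_mul_cancel₀ a hb.ne'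
  calc a * b ^ (1 - 1/r) = (a/b) ^ (1:ℝ) * b ^ (1/p + 1/q) := by
        rw [Real.rpow_one, hb1, ← mul_assoc, ha']
    _ ≤ (a/b) ^ (γ + 1/p) * b ^ (1/p + 1/q) :=
        mul_le_mul_of_nonneg_right key (Real.rpow_nonneg hb.le _)
    _ = (a/b) ^ γ * a ^ (1/p) * b ^ (1/q) := by
        rw [Real.rpow_add ht0, Real.rpow_add hb, ← ha', Real.mul_rpow ht0.le hb.le, ha']
        ring

lemma aux2 (p q r a b : ℝ) (hp : 1 < p) (hq : 1 < q)
    (hpqr : 1/p + 1/q + 1/r = 2)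
    (ha : 0 < a) (hb : 0 < b) :
    (min a b) ^ (1/r) * (a*b) ^ (1 - 1/r) ≤
      (min (a/b) (b/a)) ^ (min (1 - 1/p) (1 - 1/q)) * a ^ (1/p) * b ^ (1/q) := by
  set γ := min (1 - 1/p) (1 - 1/q) with hγdef
  rcases le_total a b with hab | hab
  · have h1 : min a b = a := min_eq_left hab
    have h2 : min (a/b) (b/a) = a/b :=
      min_eq_left (((div_le_one hb).2 hab).trans ((one_le_div ha).2 hab))
    have h3 : a ^ (1/r) * (a*b) ^ (1 - 1/r) = a * b ^ (1-1/r) := by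
      rw [Real.mul_rpow ha.le hb.le, ← mul_assoc, ← Real.rpow_add ha]
      norm_num
    rw [h1, h2, h3]
    exact aux1 p q r γ a b hpqr (by have := min_le_left (1-1/p) (1-1/q); linarith) ha hb hab
  · have h1 : min a b = b := min_eq_right hab
    have h2 : min (a/b) (b/a) = b/a :=
      min_eq_right (((div_le_one ha).2 hab).trans ((one_le_div hb).2 hab))
    have h3 : b ^ (1/r) * (a*b) ^ (1 - 1/r) = b * a ^ (1-1/r) := by
      rw [Real.mul_rpow ha.le hb.le, mul_comm (a ^ (1-1/r)), ← mul_assoc,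
        ← Real.rpow_add hb]
      norm_num
    rw [h1, h2, h3]
    calc b * a ^ (1-1/r) ≤ (b/a) ^ γ * b ^ (1/q) * a ^ (1/p) :=
          aux1 q p r γ b a (by linarith) (by have := min_le_right (1-1/p) (1-1/q); linarith) hb ha hab
      _ = (b/a) ^ γ * a ^ (1/p) * b ^ (1/q) := by ring

theorem conv_indicator_bound (p q r : ℝ) (hp : 1 < p) (hq : 1 < q) (hr : 1 < r)
    (hpqr : 1/p + 1/q + 1/r = 2) (d : ℕ) (hd : 1 ≤ d) :
    ∃ C γ : ℝ, 0 < γ ∧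
      ∀ E E' : Set (Ed d), MeasurableSet E → MeasurableSet E' →
        0 < volume E → volume E ≠ ⊤ → 0 < volume E' → volume E' ≠ ⊤ →
        nrm (r/(r-1)) (conv (E.indicator 1) (E'.indicator 1)) ≤
          C * (min ((volume E).toReal / (volume E').toReal)
                   ((volume E').toReal / (volume E).toReal)) ^ γ
            * (volume E).toReal ^ (1/p) * (volume E').toReal ^ (1/q) := by
  have hp0 : (0:ℝ) < p := by linarith
  have hq0 : (0:ℝ) < q := by linarith
  have hr0 : (0:ℝ) < r := by linarith
  refine ⟨1, min (1 - 1/p) (1 - 1/q),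
    lt_min (by rw [sub_pos]; exact (div_lt_one hp0).2 hp)
           (by rw [sub_pos]; exact (div_lt_one hq0).2 hq), ?_⟩
  intro E E' hE hE' hE0 hEt hE'0 hE't
  -- notation
  set a := (volume E).toReal with hadef
  set b := (volume E').toReal with hbdef
  have ha : 0 < a := ENNReal.toReal_pos hE0.ne' hEt
  have hb : 0 < b := ENNReal.toReal_pos hE'0.ne' hE't
  set g1 : Ed d → ℝ := E.indicator 1 with hg1def
  set g2 : Ed d → ℝ := E'.indicator 1 with hg2def
  have hg1m : Measurable g1 := measurable_one.indicator hE
  have hg2m : Measurable g2 := measurable_one.indicator hE'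
  have hg1nn : ∀ x, 0 ≤ g1 x := fun x => Set.indicator_nonneg (fun _ _ => zero_le_one) x
  have hg2nn : ∀ x, 0 ≤ g2 x := fun x => Set.indicator_nonneg (fun _ _ => zero_le_one) x
  have hg1le : ∀ x, g1 x ≤ 1 := fun x => by
    rw [hg1def]; unfold Set.indicator; split <;> norm_num
  have hg2le : ∀ x, g2 x ≤ 1 := fun x => by
    rw [hg2def]; unfold Set.indicator; split <;> norm_num
  have hint1 : Integrable g1 volume := by
    rw [hg1def, integrable_indicator_iff hE]
    exact integrableOn_const hEt
  have hint2 : Integrable g2 volume := by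
    rw [hg2def, integrable_indicator_iff hE']
    exact integrableOn_const hE't
  have hIg1 : ∫ y, g1 y = a := by rw [hg1def, integral_indicator_one hE]; rfl
  have hIg2 : ∫ y, g2 y = b := by rw [hg2def, integral_indicator_one hE']; rfl
  set f : Ed d → ℝ := conv g1 g2 with hfdef
  have hfeq : ∀ x, f x = ∫ y, g1 (x - y) * g2 y := fun x => rfl
  -- pointwise facts
  have hf0 : ∀ x, 0 ≤ f x := fun x =>
    integral_nonneg fun y => mul_nonneg (hg1nn _) (hg2nn _)
  have hfb : ∀ x, f x ≤ b := by
    intro x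
    rw [hfeq, ← hIg2]
    refine integral_mono_of_nonneg (Filter.Eventually.of_forall fun y => mul_nonneg (hg1nn _) (hg2nn _))
      hint2 (Filter.Eventually.of_forall fun y => ?_)
    calc g1 (x - y) * g2 y ≤ 1 * g2 y :=
          mul_le_mul_of_nonneg_right (hg1le _) (hg2nn _)
      _ = g2 y := one_mul _
  have hfa : ∀ x, f x ≤ a := by
    intro x
    rw [hfeq]
    have h1 : ∫ y, g1 (x - y) = a := by rw [integral_sub_left_eq_self g1 volume x, hIg1]
    rw [← h1]
    refine integral_mono_of_nonneg (Filter.Eventually.of_forall fun y => mul_nonneg (hg1nn _) (hg2nn _))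
      (hint1.comp_sub_left x) (Filter.Eventually.of_forall fun y => ?_)
    calc g1 (x - y) * g2 y ≤ g1 (x - y) * 1 :=
          mul_le_mul_of_nonneg_left (hg2le _) (hg1nn _)
      _ = g1 (x - y) := mul_one _
  -- measurability of f
  have hfm : AEStronglyMeasurable f volume := by
    have hu : StronglyMeasurable (Function.uncurry fun x y => g1 (x - y) * g2 y) :=
      ((hg1m.comp (measurable_fst.sub measurable_snd)).mul
        (hg2m.comp measurable_snd)).stronglyMeasurable
    exact hu.integral_prod_right'.aestronglyMeasurable
  -- lintegral identities
  have lg1 : ∫⁻ y, ENNReal.ofReal (g1 y) ∂volume = volume E := by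
    have h : (fun y => ENNReal.ofReal (g1 y)) = E.indicator 1 := by
      funext y
      rw [hg1def]; unfold Set.indicator; split <;> simp
    rw [h, lintegral_indicator_one hE]
  have lg2 : ∫⁻ y, ENNReal.ofReal (g2 y) ∂volume = volume E' := by
    have h : (fun y => ENNReal.ofReal (g2 y)) = E'.indicator 1 := by
      funext y
      rw [hg2def]; unfold Set.indicator; split <;> simp
    rw [h, lintegral_indicator_one hE']
  have key1 : ∀ x, ENNReal.ofReal (f x) = ∫⁻ y, ENNReal.ofReal (g1 (x - y) * g2 y) := by
    intro x
    have hmeas : AEStronglyMeasurable (fun y => g1 (x - y) * g2 y) volume :=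
      ((hg1m.comp (measurable_const.sub measurable_id)).mul hg2m).aestronglyMeasurable
    have h1 : f x = (∫⁻ y, ENNReal.ofReal (g1 (x - y) * g2 y)).toReal := by
      rw [hfeq]
      exact integral_eq_lintegral_of_nonneg_ae
        (Filter.Eventually.of_forall fun y => mul_nonneg (hg1nn _) (hg2nn _)) hmeas
    have h2 : (∫⁻ y, ENNReal.ofReal (g1 (x - y) * g2 y)) ≠ ⊤ := by
      refine ne_top_of_le_ne_top hE't (le_trans (lintegral_mono fun y => ?_) lg2.le)
      apply ENNReal.ofReal_le_ofReal
      calc g1 (x - y) * g2 y ≤ 1 * g2 y :=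
            mul_le_mul_of_nonneg_right (hg1le _) (hg2nn _)
        _ = g2 y := one_mul _
    rw [h1, ENNReal.ofReal_toReal h2]
  have key2 : ∫⁻ x, ENNReal.ofReal (f x) = volume E * volume E' := by
    calc ∫⁻ x, ENNReal.ofReal (f x)
        = ∫⁻ x, ∫⁻ y, ENNReal.ofReal (g1 (x - y) * g2 y) := by
          exact lintegral_congr key1
      _ = ∫⁻ y, ∫⁻ x, ENNReal.ofReal (g1 (x - y) * g2 y) := by
          apply lintegral_lintegral_swap
          exact (ENNReal.measurable_ofReal.comp
            ((hg1m.comp (measurable_fst.sub measurable_snd)).mul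
              (hg2m.comp measurable_snd))).aemeasurable
      _ = ∫⁻ y, ENNReal.ofReal (g2 y) * volume E := by
          refine lintegral_congr fun y => ?_
          calc ∫⁻ x, ENNReal.ofReal (g1 (x - y) * g2 y)
              = ∫⁻ x, ENNReal.ofReal (g1 (x - y)) * ENNReal.ofReal (g2 y) := by
                refine lintegral_congr fun x => ENNReal.ofReal_mul (hg1nn _)
            _ = (∫⁻ x, ENNReal.ofReal (g1 (x - y))) * ENNReal.ofReal (g2 y) :=
                lintegral_mul_const' _ _ ENNReal.ofReal_ne_top
            _ = ENNReal.ofReal (g2 y) * volume E := by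
                rw [lintegral_sub_right_eq_self (fun z => ENNReal.ofReal (g1 z)) y, lg1,
                  mul_comm]
      _ = volume E * volume E' := by
          rw [lintegral_mul_const' _ _ hEt, lg2, mul_comm]
  -- the exponent s = r/(r-1)
  set s := r/(r-1) with hsdef
  have hr1 : (0:ℝ) < r - 1 := by linarith
  have hs0 : 0 < s := div_pos hr0 hr1
  have hsinv : 1/s = 1 - 1/r := by rw [hsdef]; field_simp
  have hs1 : (0:ℝ) < s - 1 := by
    rw [hsdef]
    rw [sub_pos, lt_div_iff₀ hr1]
    linarith
  set M := min a b with hMdef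
  have hM : 0 < M := lt_min ha hb
  -- pointwise power bound
  have hptw : ∀ x, (‖f x‖₊ : ℝ≥0∞) ^ s ≤ ENNReal.ofReal (M^(s-1) * f x) := by
    intro x
    rw [← enorm_eq_nnnorm, Real.enorm_eq_ofReal (hf0 x), ENNReal.ofReal_rpow_of_nonneg (hf0 x) hs0.le]
    apply ENNReal.ofReal_le_ofReal
    rcases eq_or_lt_of_le (hf0 x) with h | h
    · rw [← h, Real.zero_rpow hs0.ne', mul_zero]
    · have hfxs : f x ^ s = f x ^ (s-1) * f x := by
        rw [← Real.rpow_add_one h.ne' (s-1)]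
        norm_num
      rw [hfxs]
      exact mul_le_mul_of_nonneg_right
        (Real.rpow_le_rpow (hf0 x) (le_min (hfa x) (hfb x)) hs1.le) (hf0 x)
  -- lintegral bound
  have hlint : ∫⁻ x, (‖f x‖₊ : ℝ≥0∞) ^ s ≤
      ENNReal.ofReal (M^(s-1)) * (volume E * volume E') := by
    calc ∫⁻ x, (‖f x‖₊ : ℝ≥0∞) ^ s ≤ ∫⁻ x, ENNReal.ofReal (M^(s-1) * f x) :=
          lintegral_mono hptw
      _ = ∫⁻ x, ENNReal.ofReal (M^(s-1)) * ENNReal.ofReal (f x) :=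
          lintegral_congr fun x => ENNReal.ofReal_mul (Real.rpow_nonneg hM.le _)
      _ = ENNReal.ofReal (M^(s-1)) * ∫⁻ x, ENNReal.ofReal (f x) :=
          lintegral_const_mul' _ _ ENNReal.ofReal_ne_top
      _ = ENNReal.ofReal (M^(s-1)) * (volume E * volume E') := by rw [key2]
  -- compute nrm
  have hnrm : nrm s f = (∫⁻ x, (‖f x‖₊ : ℝ≥0∞) ^ s).toReal ^ (1/s) := by
    rw [nrm, eLpNorm_eq_lintegral_rpow_enorm_toReal (ENNReal.ofReal_pos.2 hs0).ne'
      ENNReal.ofReal_ne_top, ENNReal.toReal_ofReal hs0.le, ← ENNReal.toReal_rpow]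
    rfl
  have hfin : ENNReal.ofReal (M^(s-1)) * (volume E * volume E') ≠ ⊤ :=
    ENNReal.mul_ne_top ENNReal.ofReal_ne_top (ENNReal.mul_ne_top hEt hE't)
  have hbound : nrm s f ≤ (M^(s-1) * (a*b)) ^ (1/s) := by
    rw [hnrm]
    have h1 : (∫⁻ x, (‖f x‖₊ : ℝ≥0∞) ^ s).toReal ≤
        (ENNReal.ofReal (M^(s-1)) * (volume E * volume E')).toReal :=
      ENNReal.toReal_mono hfin hlint
    have h2 : (ENNReal.ofReal (M^(s-1)) * (volume E * volume E')).toReal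
        = M^(s-1) * (a*b) := by
      rw [ENNReal.toReal_mul, ENNReal.toReal_mul,
        ENNReal.toReal_ofReal (Real.rpow_nonneg hM.le _)]
    rw [← h2]
    exact Real.rpow_le_rpow ENNReal.toReal_nonneg h1 (by positivity)
  have hfinal : (M^(s-1) * (a*b)) ^ (1/s) = M ^ (1/r) * (a*b) ^ (1-1/r) := by
    have hx : (s - 1) * (1/s) = 1/r := by
      rw [hsdef]
      field_simp
      ring
    rw [Real.mul_rpow (Real.rpow_nonneg hM.le _) (by positivity),
      ← Real.rpow_mul hM.le, hx, hsinv]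
  calc nrm s f ≤ M ^ (1/r) * (a*b) ^ (1-1/r) := by rw [← hfinal]; exact hbound
    _ ≤ (min (a/b) (b/a)) ^ (min (1 - 1/p) (1 - 1/q)) * a ^ (1/p) * b ^ (1/q) :=
        aux2 p q r a b hp hq hpqr ha hb
    _ = 1 * (min (a/b) (b/a)) ^ (min (1 - 1/p) (1 - 1/q)) * a ^ (1/p) * b ^ (1/q) := by
        ring
end
end

section
/- Let p, q, r ∈ (1,∞) satisfy 1/p + 1/q + 1/r = 2, let d ≥ 1, and let 0 < γ ≤ Γ < ∞. Let (f_ν, g_ν, h_ν) be a normalized extremizing sequence of triples of nonnegative functions in (L^p × L^q × L^r)(ℝ^d) with ‖f_ν‖_p = ‖g_ν‖_q = ‖h_ν‖_r = 1, and suppose that for every ν the values of the rearrangements on the unit sphere satisfy f_ν^⋆(x), g_ν^⋆(x), h_ν^⋆(x) ∈ [γ, Γ] for |x| = 1. Then the sequence (f_ν^⋆) is precompact in L^p(ℝ^d), and likewise (g_ν^⋆), (h_ν^⋆) are precompact in L^q(ℝ^d), L^r(ℝ^d) respectively. -/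
open MeasureTheory Filter Metric Set
noncomputable section

/-- The pairing ⟨u,v⟩ = ∫ u v. -/
def pairing {d : ℕ} (u v : Ed d → ℝ) : ℝ := ∫ x, u x * v x

/-- C_s = (s^{1/s}/(s')^{1/s'})^{1/2} where s' = s/(s-1). -/
def Cst (s : ℝ) : ℝ := Real.sqrt ((s ^ (1/s)) / ((s/(s-1)) ^ (1/(s/(s-1)))))

/-- The sharp Young constant A_{p,q,r} = C_p C_q C_r. -/
def Apqr (p q r : ℝ) : ℝ := Cst p * Cst q * Cst r

/-- f is η-normalized with exponent p with respect to Θ, R. -/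
def IsNormalized {d : ℕ} (Θ Rf : ℝ → ℝ) (p η : ℝ) (f : Ed d → ℝ) : Prop :=
  (eLpNorm f (ENNReal.ofReal p) volume).toReal = 1 ∧
  ∀ ρ : ℝ, 0 < ρ → ρ ≤ Rf η →
    (∫ x in {x : Ed d | ρ < |f x|}, |f x| ^ p) ≤ Θ ρ ∧
    (∫ x in {x : Ed d | |f x| < ρ⁻¹}, |f x| ^ p) ≤ Θ ρ

/-- fs is (a.e. version of) the symmetric nonincreasing rearrangement of f:
nonnegative, radial nonincreasing, and equimeasurable with f. -/
def IsRearrangement {d : ℕ} (f fs : Ed d → ℝ) : Prop :=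
  (∀ x, 0 ≤ fs x) ∧ (∀ x y : Ed d, ‖x‖ ≤ ‖y‖ → fs y ≤ fs x) ∧
  (∀ t : ℝ, 0 < t → volume {x : Ed d | t < fs x} = volume {x : Ed d | t < f x})

/-- Precompactness of a sequence of functions in L^p: every subsequence admits a further
subsequence converging in L^p norm. -/
def LpPrecompact {d : ℕ} (p : ℝ) (F : ℕ → Ed d → ℝ) : Prop :=
  ∀ φ : ℕ → ℕ, StrictMono φ → ∃ ψ : ℕ → ℕ, StrictMono ψ ∧ ∃ g : Ed d → ℝ,
    Tendsto (fun n => (eLpNorm (fun x => F (φ (ψ n)) x - g x) (ENNReal.ofReal p) volume).toReal)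
      atTop (nhds 0)

namespace RESP
open scoped ENNReal

variable {d : ℕ} {p : ℝ}




lemma exists_unit (hd : 1 ≤ d) : ∃ e : Ed d, ‖e‖ = 1 := by
  refine ⟨EuclideanSpace.single ⟨0, hd⟩ 1, ?_⟩
  rw [EuclideanSpace.norm_single]; norm_num

lemma radial_measurable (hd : 1 ≤ d) {fs : Ed d → ℝ}
    (hmono : ∀ x y : Ed d, ‖x‖ ≤ ‖y‖ → fs y ≤ fs x) : Measurable fs := by
  obtain ⟨e, he⟩ := exists_unit hd
  have hkey : ∀ t : ℝ, ‖(max t 0) • e‖ = max t 0 := fun t => by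
    rw [norm_smul, he, mul_one, Real.norm_eq_abs, abs_of_nonneg (le_max_right t 0)]
  have hanti : Antitone (fun t : ℝ => fs ((max t 0) • e)) := fun s t hst =>
    hmono _ _ (by rw [hkey, hkey]; exact max_le_max hst le_rfl)
  have heq : fs = (fun t : ℝ => fs ((max t 0) • e)) ∘ (fun x : Ed d => ‖x‖) := by
    funext x
    have h1 : ‖(max ‖x‖ 0) • e‖ = ‖x‖ := by
      rw [hkey]; exact max_eq_left (norm_nonneg x)
    exact le_antisymm (hmono _ _ h1.le) (hmono _ _ h1.ge)
  rw [heq]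
  exact hanti.measurable.comp measurable_norm

lemma lt_rpow_iff (hp : 0 < p) {t s : ℝ} (ht : 0 < t) (hs : 0 ≤ s) :
    t < s ^ p ↔ t ^ p⁻¹ < s := by
  constructor
  · intro hx
    have h2 := Real.rpow_lt_rpow ht.le hx (by positivity : (0:ℝ) < p⁻¹)
    rwa [Real.rpow_rpow_inv hs hp.ne'] at h2
  · intro hx
    have h2 := Real.rpow_lt_rpow (by positivity) hx hp
    rwa [Real.rpow_inv_rpow ht.le hp.ne'] at h2

lemma cheby (hp : 0 < p) {f : Ed d → ℝ} (hf : AEMeasurable f volume)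
    (hint : ∫⁻ x, ENNReal.ofReal (f x) ^ p ∂volume ≤ 1) {t : ℝ} (ht : 0 < t) :
    volume {x : Ed d | t < f x} ≤ (ENNReal.ofReal (t ^ p))⁻¹ := by
  have h1 : volume {x : Ed d | t < f x}
      ≤ volume {x : Ed d | ENNReal.ofReal (t ^ p) ≤ ENNReal.ofReal (f x) ^ p} := by
    apply measure_mono
    intro x hx
    have h2 : ENNReal.ofReal t ≤ ENNReal.ofReal (f x) := ENNReal.ofReal_le_ofReal (le_of_lt hx)
    calc ENNReal.ofReal (t ^ p) = ENNReal.ofReal t ^ p :=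
          (ENNReal.ofReal_rpow_of_nonneg ht.le hp.le).symm
    _ ≤ ENNReal.ofReal (f x) ^ p := ENNReal.rpow_le_rpow h2 hp.le
  have h3 := mul_meas_ge_le_lintegral₀ (μ := volume)
    (hf.ennreal_ofReal.pow (aemeasurable_const (b := p))) (ENNReal.ofReal (t ^ p))
  have h4 : ENNReal.ofReal (t ^ p) * volume {x : Ed d | t < f x} ≤ 1 :=
    le_trans (mul_le_mul_right h1 _) (le_trans h3 hint)
  rw [mul_comm] at h4
  exact ENNReal.le_inv_iff_mul_le.2 h4





lemma lt_rpow_iff' (hp : 0 < p) {t s : ℝ} (ht : 0 < t) (hs : 0 ≤ s) :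
    t < s ^ p ↔ t ^ p⁻¹ < s := by
  constructor
  · intro hx
    have h2 := Real.rpow_lt_rpow ht.le hx (by positivity : (0:ℝ) < p⁻¹)
    rwa [Real.rpow_rpow_inv hs hp.ne'] at h2
  · intro hx
    have h2 := Real.rpow_lt_rpow (by positivity) hx hp
    rwa [Real.rpow_inv_rpow ht.le hp.ne'] at h2

lemma meas_ge_eq {G H : Ed d → ℝ} (hG : Measurable G) (hH : Measurable H)
    (heq : ∀ t : ℝ, 0 < t → volume {x : Ed d | t < G x} = volume {x : Ed d | t < H x})
    (hfin : ∀ t : ℝ, 0 < t → volume {x : Ed d | t < H x} ≠ ⊤)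
    {c : ℝ} (hc : 0 < c) :
    volume {x : Ed d | c ≤ G x} = volume {x : Ed d | c ≤ H x} := by
  have hseq : ∀ n : ℕ, 0 < c - c / (n + 2) := by
    intro n
    have h1 : c / (n + 2) < c := by
      apply div_lt_self hc
      have : (0:ℝ) ≤ (n:ℝ) := Nat.cast_nonneg n
      linarith
    linarith
  have htend : Tendsto (fun n : ℕ => c - c / (n + 2)) atTop (nhds c) := by
    have h0 : Tendsto (fun n : ℕ => c / (n + 2)) atTop (nhds 0) := by
      apply Tendsto.div_atTop (tendsto_const_nhds)
      exact tendsto_atTop_add_const_right _ 2 tendsto_natCast_atTop_atTop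
    simpa using tendsto_const_nhds.sub h0
  have hmono : ∀ n m : ℕ, n ≤ m → c - c / (n + 2) ≤ c - c / (m + 2) := by
    intro n m hnm
    have : c / (m + 2) ≤ c / (n + 2) := by
      apply div_le_div_of_nonneg_left hc.le (by positivity)
      have : (n:ℝ) ≤ (m:ℝ) := Nat.cast_le.2 hnm
      linarith
    linarith
  have key : ∀ (F : Ed d → ℝ), Measurable F → volume {x : Ed d | c - c / (((0:ℕ):ℝ) + 2) < F x} ≠ ⊤ →
      Tendsto (fun n : ℕ => volume {x : Ed d | c - c / (n + 2) < F x}) atTop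
        (nhds (volume {x : Ed d | c ≤ F x})) := by
    intro F hF hFfin
    have hiff : ⋂ n : ℕ, {x : Ed d | c - c / (n + 2) < F x} = {x : Ed d | c ≤ F x} := by
      ext x
      simp only [mem_iInter, mem_setOf_eq]
      constructor
      · intro hx
        exact le_of_tendsto htend (Eventually.of_forall fun n => (hx n).le)
      · intro hx n
        exact lt_of_lt_of_le (by linarith [hseq n, (div_pos hc (by positivity : (0:ℝ) < n + 2))]) hx
    have h := tendsto_measure_iInter_atTop (μ := volume)
      (s := fun n : ℕ => {x : Ed d | c - c / (n + 2) < F x}) ?_ ?_ ?_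
    · rwa [hiff] at h
    · intro n
      exact (measurableSet_lt measurable_const hF).nullMeasurableSet
    · intro n m hnm x hx
      simp only [mem_setOf_eq] at hx ⊢
      exact lt_of_le_of_lt (hmono n m hnm) hx
    · exact ⟨0, hFfin⟩

  have h1 := key G hG (by rw [heq _ (hseq 0)]; exact hfin _ (hseq 0))
  have h2 := key H hH (hfin _ (hseq 0))
  have heqn : ∀ n : ℕ, volume {x : Ed d | c - c / (n + 2) < G x}
      = volume {x : Ed d | c - c / (n + 2) < H x} := fun n => heq _ (hseq n)
  refine tendsto_nhds_unique ?_ h2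
  have hfe : (fun n : ℕ => volume {x : Ed d | c - c / (n + 2) < H x})
      = fun n : ℕ => volume {x : Ed d | c - c / (n + 2) < G x} := funext fun n => (heqn n).symm
  rw [hfe]
  exact h1

/-- Generic layer-cake comparison: if the superlevel measures of `w ∘ G` and `w ∘ H`
agree for positive levels, the lintegrals agree. -/
lemma lint_eq_of_lev {G H : Ed d → ℝ} (hG : Measurable G) (hH : Measurable H)
    (hGnn : ∀ x, 0 ≤ G x) (hHnn : ∀ x, 0 ≤ H x)
    (w : ℝ → ℝ) (hwnn : ∀ s, 0 ≤ s → 0 ≤ w s) (hwm : Measurable w)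
    (hlev : ∀ t : ℝ, 0 < t →
      volume {x : Ed d | t < w (G x)} = volume {x : Ed d | t < w (H x)}) :
    ∫⁻ x, ENNReal.ofReal (w (G x)) = ∫⁻ x, ENNReal.ofReal (w (H x)) := by
  rw [lintegral_eq_lintegral_meas_lt volume (ae_of_all _ fun x => hwnn _ (hGnn x))
      (hwm.comp hG).aemeasurable,
    lintegral_eq_lintegral_meas_lt volume (ae_of_all _ fun x => hwnn _ (hHnn x))
      (hwm.comp hH).aemeasurable]
  apply lintegral_congr_ae
  filter_upwards [ae_restrict_mem measurableSet_Ioi] with t ht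
  exact hlev t ht

lemma w_rpow_meas (hp : 0 < p) : Measurable (fun s : ℝ => s ^ p) :=
  measurable_id.pow measurable_const

/-- total masses agree -/
lemma lint_total_eq (hp : 1 < p) {G H : Ed d → ℝ} (hG : Measurable G) (hH : Measurable H)
    (hGnn : ∀ x, 0 ≤ G x) (hHnn : ∀ x, 0 ≤ H x)
    (heq : ∀ t : ℝ, 0 < t → volume {x : Ed d | t < G x} = volume {x : Ed d | t < H x}) :
    ∫⁻ x, ENNReal.ofReal (G x ^ p) = ∫⁻ x, ENNReal.ofReal (H x ^ p) := by
  have hp0 : 0 < p := by linarith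
  apply lint_eq_of_lev hG hH hGnn hHnn _ (fun s hs => Real.rpow_nonneg hs p) (w_rpow_meas hp0)
  intro t ht
  have h1 : ∀ (F : Ed d → ℝ), (∀ x, 0 ≤ F x) →
      {x : Ed d | t < F x ^ p} = {x : Ed d | t ^ p⁻¹ < F x} := by
    intro F hF
    ext x
    exact lt_rpow_iff' hp0 ht (hF x)
  rw [h1 G hGnn, h1 H hHnn]
  exact heq _ (Real.rpow_pos_of_pos ht _)

/-- the parts above a positive cutoff agree -/
lemma lint_above_eq (hp : 1 < p) {G H : Ed d → ℝ} (hG : Measurable G) (hH : Measurable H)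
    (hGnn : ∀ x, 0 ≤ G x) (hHnn : ∀ x, 0 ≤ H x)
    (heq : ∀ t : ℝ, 0 < t → volume {x : Ed d | t < G x} = volume {x : Ed d | t < H x})
    {ρ : ℝ} (hρ : 0 < ρ) :
    ∫⁻ x in {x : Ed d | ρ < G x}, ENNReal.ofReal (G x ^ p)
      = ∫⁻ x in {x : Ed d | ρ < H x}, ENNReal.ofReal (H x ^ p) := by
  have hp0 : 0 < p := by linarith
  have hw : ∀ (F : Ed d → ℝ), Measurable F →
      ∫⁻ x, ENNReal.ofReal (if ρ < F x then F x ^ p else 0)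
        = ∫⁻ x in {x : Ed d | ρ < F x}, ENNReal.ofReal (F x ^ p) := by
    intro F hF
    rw [← lintegral_indicator (measurableSet_lt measurable_const hF)]
    apply lintegral_congr
    intro x
    rw [Set.indicator_apply]
    by_cases hx : ρ < F x
    · rw [if_pos hx, if_pos (show x ∈ {x : Ed d | ρ < F x} from hx)]
    · rw [if_neg hx, if_neg (show x ∉ {x : Ed d | ρ < F x} from hx), ENNReal.ofReal_zero]
  rw [← hw G hG, ← hw H hH]
  apply lint_eq_of_lev hG hH hGnn hHnn (fun s => if ρ < s then s ^ p else 0)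
  · intro s hs
    split
    · exact Real.rpow_nonneg hs p
    · exact le_rfl
  · exact Measurable.ite (measurableSet_lt measurable_const measurable_id)
      (w_rpow_meas hp0) measurable_const
  · intro t ht
    have h1 : ∀ (F : Ed d → ℝ), (∀ x, 0 ≤ F x) →
        {x : Ed d | t < if ρ < F x then F x ^ p else 0}
          = {x : Ed d | max ρ (t ^ p⁻¹) < F x} := by
      intro F hF
      ext x
      simp only [mem_setOf_eq, max_lt_iff]
      by_cases hx : ρ < F x
      · rw [if_pos hx]
        rw [lt_rpow_iff' hp0 ht (hF x)]
        tauto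
      · rw [if_neg hx]
        constructor
        · intro h; exact absurd h (by linarith)
        · rintro ⟨h1, -⟩; exact absurd h1 hx
    rw [h1 G hGnn, h1 H hHnn]
    exact heq _ (lt_max_iff.2 (Or.inl hρ))

/-- the parts at-or-above a positive cutoff agree -/
lemma lint_ge_eq (hp : 1 < p) {G H : Ed d → ℝ} (hG : Measurable G) (hH : Measurable H)
    (hGnn : ∀ x, 0 ≤ G x) (hHnn : ∀ x, 0 ≤ H x)
    (heq : ∀ t : ℝ, 0 < t → volume {x : Ed d | t < G x} = volume {x : Ed d | t < H x})
    (hfin : ∀ t : ℝ, 0 < t → volume {x : Ed d | t < H x} ≠ ⊤)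
    {c : ℝ} (hc : 0 < c) :
    ∫⁻ x in {x : Ed d | c ≤ G x}, ENNReal.ofReal (G x ^ p)
      = ∫⁻ x in {x : Ed d | c ≤ H x}, ENNReal.ofReal (H x ^ p) := by
  have hp0 : 0 < p := by linarith
  have hw : ∀ (F : Ed d → ℝ), Measurable F →
      ∫⁻ x, ENNReal.ofReal (if c ≤ F x then F x ^ p else 0)
        = ∫⁻ x in {x : Ed d | c ≤ F x}, ENNReal.ofReal (F x ^ p) := by
    intro F hF
    rw [← lintegral_indicator (measurableSet_le measurable_const hF)]
    apply lintegral_congr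
    intro x
    rw [Set.indicator_apply]
    by_cases hx : c ≤ F x
    · rw [if_pos hx, if_pos (show x ∈ {x : Ed d | c ≤ F x} from hx)]
    · rw [if_neg hx, if_neg (show x ∉ {x : Ed d | c ≤ F x} from hx), ENNReal.ofReal_zero]
  rw [← hw G hG, ← hw H hH]
  apply lint_eq_of_lev hG hH hGnn hHnn (fun s => if c ≤ s then s ^ p else 0)
  · intro s hs
    split
    · exact Real.rpow_nonneg hs p
    · exact le_rfl
  · exact Measurable.ite (measurableSet_le measurable_const measurable_id)
      (w_rpow_meas hp0) measurable_const
  · intro t ht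
    by_cases hct : c ≤ t ^ p⁻¹
    · have h1 : ∀ (F : Ed d → ℝ), (∀ x, 0 ≤ F x) →
          {x : Ed d | t < if c ≤ F x then F x ^ p else 0} = {x : Ed d | t ^ p⁻¹ < F x} := by
        intro F hF
        ext x
        simp only [mem_setOf_eq]
        by_cases hx : c ≤ F x
        · rw [if_pos hx]
          exact lt_rpow_iff' hp0 ht (hF x)
        · rw [if_neg hx]
          constructor
          · intro h; exact absurd h (by linarith)
          · intro h; exact absurd (le_trans hct h.le) hx
      rw [h1 G hGnn, h1 H hHnn]
      exact heq _ (Real.rpow_pos_of_pos ht _)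
    · push_neg at hct
      have h1 : ∀ (F : Ed d → ℝ), (∀ x, 0 ≤ F x) →
          {x : Ed d | t < if c ≤ F x then F x ^ p else 0} = {x : Ed d | c ≤ F x} := by
        intro F hF
        ext x
        simp only [mem_setOf_eq]
        by_cases hx : c ≤ F x
        · rw [if_pos hx]
          simp only [hx, iff_true]
          exact (lt_rpow_iff' hp0 ht (hF x)).2 (lt_of_lt_of_le hct hx)
        · rw [if_neg hx]
          constructor
          · intro h; exact absurd h (by linarith)
          · intro h; exact absurd h hx
      rw [h1 G hGnn, h1 H hHnn]
      exact meas_ge_eq hG hH heq hfin hc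

/-- the parts below a positive cutoff agree -/
lemma lint_below_eq (hp : 1 < p) {G H : Ed d → ℝ} (hG : Measurable G) (hH : Measurable H)
    (hGnn : ∀ x, 0 ≤ G x) (hHnn : ∀ x, 0 ≤ H x)
    (heq : ∀ t : ℝ, 0 < t → volume {x : Ed d | t < G x} = volume {x : Ed d | t < H x})
    (hfin : ∀ t : ℝ, 0 < t → volume {x : Ed d | t < H x} ≠ ⊤)
    (htot : ∫⁻ x, ENNReal.ofReal (H x ^ p) ≠ ⊤)
    {c : ℝ} (hc : 0 < c) :
    ∫⁻ x in {x : Ed d | G x < c}, ENNReal.ofReal (G x ^ p)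
      = ∫⁻ x in {x : Ed d | H x < c}, ENNReal.ofReal (H x ^ p) := by
  have hsplit : ∀ (F : Ed d → ℝ), Measurable F →
      (∫⁻ x in {x : Ed d | c ≤ F x}, ENNReal.ofReal (F x ^ p))
        + (∫⁻ x in {x : Ed d | F x < c}, ENNReal.ofReal (F x ^ p))
        = ∫⁻ x, ENNReal.ofReal (F x ^ p) := by
    intro F hF
    have hcompl : {x : Ed d | c ≤ F x}ᶜ = {x : Ed d | F x < c} := by
      ext x; simp [not_le]
    have h0 := lintegral_add_compl (μ := volume) (fun x => ENNReal.ofReal (F x ^ p))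
      (A := {x : Ed d | c ≤ F x}) (measurableSet_le measurable_const hF)
    rw [hcompl] at h0
    simpa using h0
  have h1 := hsplit G hG
  have h2 := hsplit H hH
  have h3 := lint_ge_eq hp hG hH hGnn hHnn heq hfin hc
  have h4 := lint_total_eq hp hG hH hGnn hHnn heq
  have hfin2 : ∫⁻ x in {x : Ed d | c ≤ H x}, ENNReal.ofReal (H x ^ p) ≠ ⊤ := by
    intro hcon
    rw [← h2, hcon] at htot
    simp at htot
  apply (ENNReal.add_right_inj hfin2).1
  rw [← h3, h1, h4, h3]
  exact h2.symm

lemma lintegral_pow_eq_one (hp : 1 < p) {f : Ed d → ℝ}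
    (hfm : MemLp f (ENNReal.ofReal p) volume) (hfpos : ∀ x, 0 ≤ f x)
    (hn : (eLpNorm f (ENNReal.ofReal p) volume).toReal = 1) :
    ∫⁻ x, ENNReal.ofReal (f x ^ p) = 1 := by
  have hp0 : (0:ℝ) < p := by linarith
  have hP0 : (ENNReal.ofReal p) ≠ 0 := by
    simp only [ne_eq, ENNReal.ofReal_eq_zero, not_le]; linarith
  have hPt : (ENNReal.ofReal p) ≠ ⊤ := ENNReal.ofReal_ne_top
  have h1 : eLpNorm f (ENNReal.ofReal p) volume = 1 :=
    (ENNReal.toReal_eq_one_iff _).1 hn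
  rw [eLpNorm_eq_lintegral_rpow_enorm_toReal hP0 hPt] at h1
  rw [ENNReal.toReal_ofReal hp0.le] at h1
  have h2 : (∫⁻ x, (‖f x‖₊ : ENNReal) ^ p) = 1 := by
    have := congrArg (fun z : ENNReal => z ^ p) h1
    simp only [ENNReal.one_rpow] at this
    rwa [← ENNReal.rpow_mul, one_div, inv_mul_cancel₀ hp0.ne', ENNReal.rpow_one] at this
  rw [← h2]
  apply lintegral_congr
  intro x
  rw [← enorm_eq_nnnorm, ← ofReal_norm, Real.norm_eq_abs, abs_of_nonneg (hfpos x),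
    ENNReal.ofReal_rpow_of_nonneg (hfpos x) hp0.le]

lemma bochner_chain (hp : 1 < p) {f H : Ed d → ℝ}
    (hfm : MemLp f (ENNReal.ofReal p) volume)
    (hfae : f =ᵐ[volume] H) (hfpos : ∀ x, 0 ≤ f x) {A A' : Set (Ed d)}
    (hAA' : A =ᵐ[volume] A')
    {ε : ℝ} (hb : (∫ x in A, |f x| ^ p) ≤ ε) :
    ∫⁻ x in A', ENNReal.ofReal (H x ^ p) ≤ ENNReal.ofReal ε := by
  have hp0 : (0:ℝ) < p := by linarith
  have hint : Integrable (fun x => |f x| ^ p) volume := by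
    have h := hfm.integrable_norm_rpow (by simp only [ne_eq, ENNReal.ofReal_eq_zero, not_le]; linarith)
      ENNReal.ofReal_ne_top
    simpa [ENNReal.toReal_ofReal hp0.le, Real.norm_eq_abs] using h
  rw [Measure.restrict_congr_set hAA'.symm]
  have h1 : ∫⁻ x in A, ENNReal.ofReal (H x ^ p) = ∫⁻ x in A, ENNReal.ofReal (|f x| ^ p) := by
    apply lintegral_congr_ae
    apply ae_restrict_of_ae
    filter_upwards [hfae] with x hx
    rw [← hx, abs_of_nonneg (hfpos x)]
  rw [h1, ← ofReal_integral_eq_lintegral_ofReal (hint.restrict)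
    (ae_of_all _ fun x => by positivity)]
  exact ENNReal.ofReal_le_ofReal hb

lemma fs_bounds (hp : 1 < p) (hd : 1 ≤ d) {f fs : Ed d → ℝ}
    (hfm : MemLp f (ENNReal.ofReal p) volume) (hfpos : ∀ x, 0 ≤ f x)
    (hfnorm : (eLpNorm f (ENNReal.ofReal p) volume).toReal = 1)
    (hnn : ∀ x, 0 ≤ fs x) (hmono : ∀ x y : Ed d, ‖x‖ ≤ ‖y‖ → fs y ≤ fs x)
    (hdist : ∀ t : ℝ, 0 < t → volume {x : Ed d | t < fs x} = volume {x : Ed d | t < f x}) :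
    (∫⁻ x, ENNReal.ofReal (fs x) ^ p = 1) ∧
    (∀ t : ℝ, 0 < t → volume {x : Ed d | t < fs x} ≤ (ENNReal.ofReal (t ^ p))⁻¹) ∧
    (∀ ρ ε : ℝ, 0 < ρ → (∫ x in {x : Ed d | ρ < |f x|}, |f x| ^ p) ≤ ε →
      (∫⁻ x in {x : Ed d | ρ < fs x}, ENNReal.ofReal (fs x) ^ p) ≤ ENNReal.ofReal ε) ∧
    (∀ c ε : ℝ, 0 < c → (∫ x in {x : Ed d | |f x| < c}, |f x| ^ p) ≤ ε →
      (∫⁻ x in {x : Ed d | fs x < c}, ENNReal.ofReal (fs x) ^ p) ≤ ENNReal.ofReal ε) := by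
  have hp0 : (0:ℝ) < p := by linarith
  have hconv : ∀ (F : Ed d → ℝ), (∀ x, 0 ≤ F x) →
      ∀ x, ENNReal.ofReal (F x) ^ p = ENNReal.ofReal (F x ^ p) :=
    fun F hF x => ENNReal.ofReal_rpow_of_nonneg (hF x) hp0.le
  have hmk := hfm.1.aemeasurable
  have hf'm : Measurable (hmk.mk f) := hmk.measurable_mk
  have hfae : f =ᵐ[volume] hmk.mk f := hmk.ae_eq_mk
  set H : Ed d → ℝ := fun x => max (hmk.mk f x) 0 with hHdef
  have hHm : Measurable H := hf'm.max measurable_const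
  have hfH : f =ᵐ[volume] H := by
    filter_upwards [hfae] with x hx
    rw [hHdef]
    simp only [← hx]
    exact (max_eq_left (hfpos x)).symm
  have hHnn : ∀ x, 0 ≤ H x := fun x => le_max_right _ _
  have hsetae : ∀ t : ℝ, {x : Ed d | t < f x} =ᵐ[volume] {x : Ed d | t < H x} := by
    intro t
    filter_upwards [hfH] with x hx
    change (t < f x) = (t < H x)
    rw [hx]
  have habs : ∀ t : ℝ, {x : Ed d | t < |f x|} = {x : Ed d | t < f x} := by
    intro t; ext x; rw [mem_setOf_eq, mem_setOf_eq, abs_of_nonneg (hfpos x)]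
  have habs2 : ∀ t : ℝ, {x : Ed d | |f x| < t} = {x : Ed d | f x < t} := by
    intro t; ext x; rw [mem_setOf_eq, mem_setOf_eq, abs_of_nonneg (hfpos x)]
  have hsetae2 : ∀ t : ℝ, {x : Ed d | f x < t} =ᵐ[volume] {x : Ed d | H x < t} := by
    intro t
    filter_upwards [hfH] with x hx
    change (f x < t) = (H x < t)
    rw [hx]
  have hdistH : ∀ t : ℝ, 0 < t → volume {x : Ed d | t < fs x} = volume {x : Ed d | t < H x} :=
    fun t ht => (hdist t ht).trans (measure_congr (hsetae t))
  have hfsm : Measurable fs := radial_measurable hd hmono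
  have htotH : ∫⁻ x, ENNReal.ofReal (H x ^ p) = 1 := by
    rw [← lintegral_pow_eq_one hp hfm hfpos hfnorm]
    apply lintegral_congr_ae
    filter_upwards [hfH] with x hx
    rw [hx]
  have hfinH : ∀ t : ℝ, 0 < t → volume {x : Ed d | t < H x} ≠ ⊤ := by
    intro t ht
    have hc := cheby hp0 hHm.aemeasurable (le_of_eq (by
      rw [← htotH]; exact lintegral_congr (hconv H hHnn))) ht
    exact ne_top_of_le_ne_top (ENNReal.inv_ne_top.2 (by
      simp only [ne_eq, ENNReal.ofReal_eq_zero, not_le]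
      positivity)) hc
  have htotfs : ∫⁻ x, ENNReal.ofReal (fs x) ^ p = 1 := by
    rw [lintegral_congr (hconv fs hnn)]
    rw [lint_total_eq hp hfsm hHm hnn hHnn hdistH]
    exact htotH
  refine ⟨htotfs, ?_, ?_, ?_⟩
  · intro t ht
    rw [hdistH t ht]
    exact cheby hp0 hHm.aemeasurable (le_of_eq (by
      rw [← htotH]; exact lintegral_congr (hconv H hHnn))) ht
  · intro ρ ε hρ hb
    rw [lintegral_congr (fun x => hconv fs hnn x)]
    rw [lint_above_eq hp hfsm hHm hnn hHnn hdistH hρ]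
    apply bochner_chain hp hfm hfH hfpos _ hb
    rw [habs ρ]
    exact hsetae ρ
  · intro c ε hc hb
    rw [lintegral_congr (fun x => hconv fs hnn x)]
    rw [lint_below_eq hp hfsm hHm hnn hHnn hdistH hfinH (by rw [htotH]; exact ENNReal.one_ne_top) hc]
    apply bochner_chain hp hfm hfH hfpos _ hb
    rw [habs2 c]
    exact hsetae2 c

lemma pointwise_bound (hp : 1 < p) {fs : Ed d → ℝ}
    (hnn : ∀ x, 0 ≤ fs x) (hmono : ∀ x y : Ed d, ‖x‖ ≤ ‖y‖ → fs y ≤ fs x)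
    (hdist : ∀ t : ℝ, 0 < t → volume {x : Ed d | t < fs x} ≤ (ENNReal.ofReal (t ^ p))⁻¹)
    {x : Ed d} (hx : x ≠ 0) :
    fs x ≤ (volume (closedBall (0 : Ed d) ‖x‖)).toReal ^ (-p⁻¹) := by
  have hp0 : (0:ℝ) < p := by linarith
  set V : ℝ := (volume (closedBall (0 : Ed d) ‖x‖)).toReal with hV
  have hVpos : 0 < V := ENNReal.toReal_pos
    (measure_closedBall_pos volume 0 (norm_pos_iff.2 hx)).ne' measure_closedBall_lt_top.ne
  have hMnn : (0:ℝ) ≤ V ^ (-p⁻¹) := Real.rpow_nonneg hVpos.le _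
  have ht : ∀ t : ℝ, 0 < t → t < fs x → t ≤ V ^ (-p⁻¹) := by
    intro t ht0 htfs
    have hsub : closedBall (0 : Ed d) ‖x‖ ⊆ {y : Ed d | t < fs y} := by
      intro y hy
      rw [mem_closedBall, dist_zero_right] at hy
      exact lt_of_lt_of_le htfs (hmono y x hy)
    have h1 : volume (closedBall (0 : Ed d) ‖x‖) ≤ (ENNReal.ofReal (t ^ p))⁻¹ :=
      le_trans (measure_mono hsub) (hdist t ht0)
    have hofne : ENNReal.ofReal (t ^ p) ≠ 0 := by
      simp only [ne_eq, ENNReal.ofReal_eq_zero, not_le]; positivity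
    have h2 : V ≤ (t ^ p)⁻¹ := by
      have h3 := ENNReal.toReal_mono (ENNReal.inv_ne_top.2 hofne) h1
      rwa [ENNReal.toReal_inv, ENNReal.toReal_ofReal (by positivity)] at h3
    have h4 : t ^ p ≤ V⁻¹ := by
      rw [← inv_inv (t ^ p)]
      exact inv_anti₀ hVpos h2
    have h5 : (t ^ p) ^ p⁻¹ ≤ (V⁻¹) ^ p⁻¹ :=
      Real.rpow_le_rpow (by positivity) h4 (by positivity)
    rwa [Real.rpow_rpow_inv ht0.le hp0.ne', Real.inv_rpow hVpos.le, ← Real.rpow_neg hVpos.le] at h5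
  by_contra hcon
  push_neg at hcon
  have hfs0 : 0 < fs x := lt_of_le_of_lt hMnn hcon
  have := ht ((V ^ (-p⁻¹) + fs x)/2) (by linarith) (by linarith)
  linarith

lemma vB_anti (hp : 1 < p) {a b : ℝ} (ha : 0 < a) (hab : a ≤ b) :
    (volume (closedBall (0 : Ed d) b)).toReal ^ (-p⁻¹)
      ≤ (volume (closedBall (0 : Ed d) a)).toReal ^ (-p⁻¹) := by
  have hp0 : (0:ℝ) < p := by linarith
  have hVa : 0 < (volume (closedBall (0 : Ed d) a)).toReal := ENNReal.toReal_pos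
    (measure_closedBall_pos volume 0 ha).ne' measure_closedBall_lt_top.ne
  have hVb : 0 < (volume (closedBall (0 : Ed d) b)).toReal := lt_of_lt_of_le hVa
    (ENNReal.toReal_mono measure_closedBall_lt_top.ne
      (measure_mono (closedBall_subset_closedBall hab)))
  apply (Real.rpow_le_rpow_iff_of_neg hVb hVa (neg_lt_zero.2 (by positivity))).2
  exact ENNReal.toReal_mono measure_closedBall_lt_top.ne
    (measure_mono (closedBall_subset_closedBall hab))

lemma vB_large (hp : 1 < p) (hd : 1 ≤ d) {c : ℝ} (hc : 0 < c) :
    ∃ R : ℝ, 1 ≤ R ∧ ∀ s : ℝ, R ≤ s →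
      (volume (closedBall (0 : Ed d) s)).toReal ^ (-p⁻¹) < c := by
  have hp0 : (0:ℝ) < p := by linarith
  set B : ℝ := (volume (ball (0 : Ed d) 1)).toReal with hB
  have hBpos : 0 < B := ENNReal.toReal_pos (measure_ball_pos volume 0 one_pos).ne'
    measure_ball_lt_top.ne
  refine ⟨max 1 (c ^ (-p) / B + 1), le_max_left _ _, ?_⟩
  intro s hs
  have hs1 : (1:ℝ) ≤ s := le_trans (le_max_left _ _) hs
  have hs0 : (0:ℝ) ≤ s := by linarith
  have hVs : (volume (closedBall (0 : Ed d) s)).toReal = s ^ d * B := by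
    rw [Measure.addHaar_closedBall volume 0 hs0, finrank_euclideanSpace_fin,
      ENNReal.toReal_mul, ENNReal.toReal_ofReal (by positivity)]
  have hsd : s ≤ s ^ d := le_self_pow₀ hs1 (by omega)
  have hlarge : c ^ (-p) < (volume (closedBall (0 : Ed d) s)).toReal := by
    rw [hVs]
    have h1 : c ^ (-p) / B + 1 ≤ s := le_trans (le_max_right _ _) hs
    have h2 : c ^ (-p) / B < s := by linarith
    have h3 : c ^ (-p) < s * B := by
      rw [div_lt_iff₀ hBpos] at h2
      linarith
    nlinarith [mul_le_mul_of_nonneg_right hsd hBpos.le]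
  have hcp : (0:ℝ) < c ^ (-p) := Real.rpow_pos_of_pos hc _
  have := (Real.rpow_lt_rpow_iff_of_neg (lt_trans hcp hlarge) hcp
    (show -p⁻¹ < 0 from neg_lt_zero.2 (by positivity))).2 hlarge
  rwa [← Real.rpow_mul hc.le, neg_mul_neg, mul_inv_cancel₀ hp0.ne', Real.rpow_one] at this

lemma key (hp : 1 < p) (hd : 1 ≤ d) (fs : ℕ → Ed d → ℝ)
    (hnn : ∀ ν x, 0 ≤ fs ν x)
    (hmono : ∀ ν (x y : Ed d), ‖x‖ ≤ ‖y‖ → fs ν y ≤ fs ν x)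
    (htot : ∀ ν, ∫⁻ x, ENNReal.ofReal (fs ν x) ^ p = 1)
    (hdist : ∀ ν (t : ℝ), 0 < t → volume {x : Ed d | t < fs ν x} ≤ (ENNReal.ofReal (t ^ p))⁻¹)
    (hUI : ∀ ε : ℝ, 0 < ε → ∃ ρ₀ : ℝ, ∀ ρ : ℝ, ρ₀ ≤ ρ → ∀ᶠ ν in atTop,
      (∫⁻ x in {x : Ed d | ρ < fs ν x}, ENNReal.ofReal (fs ν x) ^ p) ≤ ENNReal.ofReal ε ∧
      (∫⁻ x in {x : Ed d | fs ν x < ρ⁻¹}, ENNReal.ofReal (fs ν x) ^ p) ≤ ENNReal.ofReal ε) :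
    LpPrecompact p fs := by
  intro φ hφ
  have hp0 : (0:ℝ) < p := by linarith
  obtain ⟨e, he⟩ := exists_unit hd
  set M : ℝ → ℝ := fun s => (volume (closedBall (0 : Ed d) s)).toReal ^ (-p⁻¹) with hM
  have hub : ∀ ν (x : Ed d), x ≠ 0 → fs ν x ≤ M ‖x‖ :=
    fun ν x hx => pointwise_bound hp (hnn ν) (hmono ν) (hdist ν) hx
  -- Helly selection on rational radii
  set U : ℕ → ℚ → ℝ := fun ν q => if 0 < (q:ℝ) then fs ν ((q:ℝ) • e) else 0 with hU
  have hnormq : ∀ q : ℝ, 0 < q → ‖q • e‖ = q := fun q hq => by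
    rw [norm_smul, he, mul_one, Real.norm_eq_abs, abs_of_pos hq]
  have hUK : ∀ ν, U ν ∈ Set.univ.pi (fun q : ℚ => Icc (0:ℝ) (if 0 < (q:ℝ) then M q else 0)) := by
    intro ν q _
    simp only [hU]
    by_cases hq : 0 < (q:ℝ)
    · rw [if_pos hq, if_pos hq]
      refine ⟨hnn ν _, ?_⟩
      have hne : ((q:ℝ) • e) ≠ 0 := by
        intro hcon
        have := hnormq q hq
        rw [hcon, norm_zero] at this
        linarith
      have h2 := hub ν ((q:ℝ) • e) hne
      rwa [hnormq q hq] at h2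
    · rw [if_neg hq, if_neg hq]
      exact ⟨le_rfl, le_rfl⟩
  have hcompact : IsCompact (Set.univ.pi (fun q : ℚ => Icc (0:ℝ) (if 0 < (q:ℝ) then M q else 0))) :=
    isCompact_univ_pi fun q => isCompact_Icc
  obtain ⟨L, hLK, ψ, hψ, hconv⟩ := hcompact.tendsto_subseq
    (x := fun n => U (φ n)) (fun n => hUK (φ n))
  have hqlim : ∀ q : ℚ, Tendsto (fun n => U (φ (ψ n)) q) atTop (nhds (L q)) :=
    fun q => (tendsto_pi_nhds.1 hconv) q
  have hLnn : ∀ q : ℚ, 0 ≤ L q := fun q => (hLK q (mem_univ q)).1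
  have hLub : ∀ q : ℚ, 0 < (q:ℝ) → L q ≤ M q := by
    intro q hq
    have h2 := (hLK q (mem_univ q)).2
    rwa [if_pos hq] at h2
  have hLanti : ∀ q1 q2 : ℚ, 0 < (q1:ℝ) → q1 ≤ q2 → L q2 ≤ L q1 := by
    intro q1 q2 hq1 h12
    have hq2 : 0 < (q2:ℝ) := lt_of_lt_of_le hq1 (by exact_mod_cast h12)
    apply le_of_tendsto_of_tendsto' (hqlim q2) (hqlim q1)
    intro n
    simp only [hU, if_pos hq1, if_pos hq2]
    apply hmono
    rw [hnormq _ hq1, hnormq _ hq2]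
    exact_mod_cast h12
  -- the antitone envelope
  set Φ : ℝ → ℝ := fun s => sSup (L '' {q : ℚ | Real.exp s < (q:ℝ)}) with hΦ
  have hne : ∀ s : ℝ, (L '' {q : ℚ | Real.exp s < (q:ℝ)}).Nonempty := by
    intro s
    obtain ⟨q, hq⟩ := exists_rat_gt (Real.exp s)
    exact ⟨L q, ⟨q, hq, rfl⟩⟩
  have hbdd : ∀ s : ℝ, ∀ y ∈ L '' {q : ℚ | Real.exp s < (q:ℝ)}, y ≤ M (Real.exp s) := by
    rintro s y ⟨q, hq, rfl⟩
    have hq0 : 0 < (q:ℝ) := lt_trans (Real.exp_pos s) hq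
    exact le_trans (hLub q hq0) (vB_anti hp (Real.exp_pos s) hq.le)
  have hbdd' : ∀ s : ℝ, BddAbove (L '' {q : ℚ | Real.exp s < (q:ℝ)}) := fun s => ⟨_, hbdd s⟩
  have hΦanti : Antitone Φ := by
    intro s1 s2 h12
    apply csSup_le_csSup (hbdd' s1) (hne s2)
    apply image_mono
    intro q hq
    exact lt_of_le_of_lt (Real.exp_le_exp.2 h12) hq
  have hΦnn : ∀ s, 0 ≤ Φ s := by
    intro s
    obtain ⟨y, hy⟩ := hne s
    obtain ⟨q, hq, rfl⟩ := hy
    exact le_trans (hLnn q) (le_csSup (hbdd' s) ⟨q, hq, rfl⟩)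
  have hΦub : ∀ s, Φ s ≤ M (Real.exp s) := fun s => csSup_le (hne s) (hbdd s)
  have hΦleL : ∀ (q : ℚ) (s : ℝ), Real.exp s < (q:ℝ) → L q ≤ Φ s :=
    fun q s h => le_csSup (hbdd' s) ⟨q, h, rfl⟩
  have hLleΦ : ∀ q : ℚ, 0 < (q:ℝ) → Φ (Real.log q) ≤ L q := by
    intro q hq
    apply csSup_le (hne _)
    rintro y ⟨q', hq', rfl⟩
    rw [Real.exp_log hq] at hq'
    simp only [mem_setOf_eq] at hq'
    exact hLanti q q' hq (by exact_mod_cast hq'.le)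
  set g : Ed d → ℝ := fun x => Φ (Real.log ‖x‖) with hgdef
  have hgm : Measurable g := hΦanti.measurable.comp measurable_norm.log
  have hgnn : ∀ x, 0 ≤ g x := fun x => hΦnn _
  have hgub : ∀ x : Ed d, x ≠ 0 → g x ≤ M ‖x‖ := by
    intro x hx
    have h1 := hΦub (Real.log ‖x‖)
    rwa [Real.exp_log (norm_pos_iff.2 hx)] at h1
  -- convergence at continuity points of Φ
  have hcv : ∀ x : Ed d, x ≠ 0 → ContinuousAt Φ (Real.log ‖x‖) →
      Tendsto (fun n => fs (φ (ψ n)) x) atTop (nhds (g x)) := by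
    intro x hx hcont
    have hr : 0 < ‖x‖ := norm_pos_iff.2 hx
    have hexp : Real.exp (Real.log ‖x‖) = ‖x‖ := Real.exp_log hr
    rw [Metric.tendsto_atTop]
    intro ε hε
    obtain ⟨δ, hδ, hcd⟩ := Metric.continuousAt_iff.1 hcont (ε/3) (by linarith)
    obtain ⟨q1, hq1a, hq1b⟩ := exists_rat_btwn
      (show Real.exp (Real.log ‖x‖ - δ/2) < ‖x‖ by
        conv_rhs => rw [← hexp]
        exact Real.exp_lt_exp.2 (by linarith))
    obtain ⟨q2, hq2a, hq2b⟩ := exists_rat_btwn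
      (show ‖x‖ < Real.exp (Real.log ‖x‖ + δ/2) by
        conv_lhs => rw [← hexp]
        exact Real.exp_lt_exp.2 (by linarith))
    have hq10 : 0 < (q1:ℝ) := lt_trans (Real.exp_pos _) hq1a
    have hq20 : 0 < (q2:ℝ) := lt_trans hr hq2a
    have h1 : L q1 ≤ Φ (Real.log ‖x‖) + ε/3 := by
      have ha := hΦleL q1 (Real.log ‖x‖ - δ/2) hq1a
      have hb := hcd (x := Real.log ‖x‖ - δ/2)
        (by rw [Real.dist_eq, abs_of_nonpos (by linarith)]; linarith)
      rw [Real.dist_eq] at hb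
      have hc' := abs_lt.1 hb
      linarith [hc'.1, hc'.2]
    have h2 : Φ (Real.log ‖x‖) - ε/3 ≤ L q2 := by
      have ha := hLleΦ q2 hq20
      have hblog : Real.log q2 ≤ Real.log ‖x‖ + δ/2 := by
        rw [← Real.log_exp (Real.log ‖x‖ + δ/2)]
        exact Real.log_le_log hq20 hq2b.le
      have hΦm := hΦanti hblog
      have hb := hcd (x := Real.log ‖x‖ + δ/2)
        (by rw [Real.dist_eq, abs_of_nonneg (by linarith)]; linarith)
      rw [Real.dist_eq] at hb
      have hc' := abs_lt.1 hb
      linarith [hc'.1, hc'.2]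
    have hev1 : ∀ᶠ n in atTop, U (φ (ψ n)) q1 < Φ (Real.log ‖x‖) + 2*ε/3 :=
      (hqlim q1).eventually_lt_const (by linarith)
    have hev2 : ∀ᶠ n in atTop, Φ (Real.log ‖x‖) - 2*ε/3 < U (φ (ψ n)) q2 :=
      (hqlim q2).eventually_const_lt (by linarith)
    rw [eventually_atTop] at hev1 hev2
    obtain ⟨N1, hN1⟩ := hev1
    obtain ⟨N2, hN2⟩ := hev2
    refine ⟨max N1 N2, fun n hn => ?_⟩
    have hb1 : fs (φ (ψ n)) x ≤ U (φ (ψ n)) q1 := by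
      simp only [hU, if_pos hq10]
      apply hmono
      rw [hnormq _ hq10]
      exact hq1b.le
    have hb2 : U (φ (ψ n)) q2 ≤ fs (φ (ψ n)) x := by
      simp only [hU, if_pos hq20]
      apply hmono
      rw [hnormq _ hq20]
      exact hq2a.le
    have e1 := hN1 n (le_trans (le_max_left _ _) hn)
    have e2 := hN2 n (le_trans (le_max_right _ _) hn)
    rw [Real.dist_eq, abs_lt]
    constructor
    · simp only [hgdef]; linarith
    · simp only [hgdef]; linarith
  -- a.e. convergence
  haveI : Nontrivial (Ed d) := nontrivial_of_ne e 0 (by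
    intro hcon; rw [hcon, norm_zero] at he; norm_num at he)
  have hae : ∀ᵐ x : Ed d ∂volume, Tendsto (fun n => fs (φ (ψ n)) x) atTop (nhds (g x)) := by
    have hD : Set.Countable {s : ℝ | ¬ContinuousAt Φ s} := hΦanti.countable_not_continuousAt
    rw [ae_iff]
    have hnull : volume (sphere (0:Ed d) 0 ∪
        ⋃ s ∈ {s : ℝ | ¬ContinuousAt Φ s}, sphere (0:Ed d) (Real.exp s)) = 0 := by
      apply measure_union_null (Measure.addHaar_sphere volume 0 0)
      exact (measure_biUnion_null_iff hD).2 fun s _ => Measure.addHaar_sphere volume 0 _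
    apply measure_mono_null _ hnull
    intro x hx
    simp only [mem_setOf_eq] at hx
    by_cases hx0 : x = 0
    · left
      rw [mem_sphere_zero_iff_norm, hx0, norm_zero]
    · right
      have hcont : ¬ContinuousAt Φ (Real.log ‖x‖) := fun hc => hx (hcv x hx0 hc)
      refine mem_biUnion (show Real.log ‖x‖ ∈ {s : ℝ | ¬ContinuousAt Φ s} from hcont) ?_
      rw [mem_sphere_zero_iff_norm, Real.exp_log (norm_pos_iff.2 hx0)]
  -- Vitali convergence
  refine ⟨ψ, hψ, g, ?_⟩
  have hP0 : (ENNReal.ofReal p) ≠ 0 := by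
    simp only [ne_eq, ENNReal.ofReal_eq_zero, not_le]; linarith
  have hPt : (ENNReal.ofReal p) ≠ ⊤ := ENNReal.ofReal_ne_top
  have hP1 : 1 ≤ ENNReal.ofReal p := by
    rw [← ENNReal.ofReal_one]; exact ENNReal.ofReal_le_ofReal hp.le
  have help : ∀ v : Ed d → ℝ, eLpNorm v (ENNReal.ofReal p) volume
      = (∫⁻ x, ENNReal.ofReal |v x| ^ p) ^ (1/p) := by
    intro v
    rw [eLpNorm_eq_lintegral_rpow_enorm_toReal hP0 hPt, ENNReal.toReal_ofReal hp0.le]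
    congr 1
    apply lintegral_congr
    intro x
    rw [← ofReal_norm, Real.norm_eq_abs]
  have hmF : ∀ n, Measurable (fs (φ (ψ n))) := fun n => radial_measurable hd (hmono _)
  suffices hT : Tendsto (fun n => eLpNorm (fun x => fs (φ (ψ n)) x - g x)
      (ENNReal.ofReal p) volume) atTop (nhds 0) by
    have h2 := (ENNReal.tendsto_toReal (show (0:ℝ≥0∞) ≠ ⊤ by simp)).comp hT
    simpa [Function.comp_def] using h2
  refine ENNReal.tendsto_atTop_zero.2 ?_
  intro ε hε
  -- set up the smallness parameters
  set ε' : ℝ≥0∞ := min ε 1 with hε'def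
  have hε'0 : 0 < ε' := lt_min hε (by norm_num)
  have hε't : ε' ≠ ⊤ := ne_top_of_le_ne_top ENNReal.one_ne_top (min_le_right _ _)
  set τ : ℝ≥0∞ := ε' / 3 with hτdef
  have hτ0 : τ ≠ 0 := by
    simp only [hτdef, ne_eq, ENNReal.div_eq_zero_iff, not_or]
    exact ⟨hε'0.ne', by norm_num⟩
  have hτt : τ ≠ ⊤ := by
    simp only [hτdef]
    exact (ENNReal.div_lt_top hε't (by norm_num)).ne
  have hτp0 : τ ^ p ≠ 0 := by
    simp only [ne_eq, ENNReal.rpow_eq_zero_iff, not_or]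
    constructor
    · rintro ⟨h1, -⟩; exact hτ0 h1
    · rintro ⟨h1, -⟩; exact hτt h1
  have hτpt : τ ^ p ≠ ⊤ := by
    intro hcon
    rw [ENNReal.rpow_eq_top_iff] at hcon
    rcases hcon with ⟨h1, _⟩ | ⟨h1, _⟩
    · exact hτ0 h1
    · exact hτt h1
  set δ : ℝ := (τ ^ p / 4).toReal with hδdef
  have hδ4ne : τ ^ p / 4 ≠ ⊤ := (ENNReal.div_lt_top hτpt (by norm_num)).ne
  have hδ0 : 0 < δ := ENNReal.toReal_pos (by
    simp only [ne_eq, ENNReal.div_eq_zero_iff, not_or]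
    exact ⟨hτp0, by norm_num⟩) hδ4ne
  have hδor : ENNReal.ofReal δ = τ ^ p / 4 := ENNReal.ofReal_toReal hδ4ne
  have hδle : ENNReal.ofReal δ + ENNReal.ofReal δ ≤ τ ^ p := by
    rw [hδor]
    calc τ ^ p / 4 + τ ^ p / 4 ≤ τ ^ p / 2 + τ ^ p / 2 :=
        add_le_add (ENNReal.div_le_div le_rfl (by norm_num)) (ENNReal.div_le_div le_rfl (by norm_num))
    _ = τ ^ p := ENNReal.add_halves _
  -- g is in L^p
  have hgp_meas : Measurable (fun x => ENNReal.ofReal (g x) ^ p) :=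
    (hgm.ennreal_ofReal).pow (measurable_const (a := p))
  have hgtot : ∫⁻ x, ENNReal.ofReal (g x) ^ p ≤ 1 := by
    have hcongr : (fun x => ENNReal.ofReal (g x) ^ p)
        =ᵐ[volume] fun x => liminf (fun n => ENNReal.ofReal (fs (φ (ψ n)) x) ^ p) atTop := by
      filter_upwards [hae] with x hx
      have h3 : Tendsto (fun n => ENNReal.ofReal (fs (φ (ψ n)) x) ^ p) atTop
          (nhds (ENNReal.ofReal (g x) ^ p)) :=
        ((ENNReal.continuous_rpow_const (y := p)).tendsto _).comp
          ((ENNReal.continuous_ofReal.tendsto _).comp hx)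
      exact h3.liminf_eq.symm
    rw [lintegral_congr_ae hcongr]
    refine le_trans (lintegral_liminf_le
      (fun n => ((hmF n).ennreal_ofReal).pow (measurable_const (a := p)))) ?_
    have h4 : ∀ n : ℕ, ∫⁻ x, ENNReal.ofReal (fs (φ (ψ n)) x) ^ p = 1 := fun n => htot _
    simp only [h4]
    rw [liminf_const]
  -- truncation and tail bounds for g
  have htrunc : ∃ n₀ : ℕ, ∫⁻ x in {x : Ed d | (n₀:ℝ) < g x}, ENNReal.ofReal (g x) ^ p
      ≤ ENNReal.ofReal δ := by
    set μ' := volume.withDensity (fun x => ENNReal.ofReal (g x) ^ p) with hμ'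
    have happ : ∀ n : ℕ, μ' {x : Ed d | (n:ℝ) < g x}
        = ∫⁻ x in {x : Ed d | (n:ℝ) < g x}, ENNReal.ofReal (g x) ^ p :=
      fun n => withDensity_apply _ (measurableSet_lt measurable_const hgm)
    have hti : Tendsto (fun n : ℕ => μ' {x : Ed d | (n:ℝ) < g x}) atTop
        (nhds (μ' (⋂ n : ℕ, {x : Ed d | (n:ℝ) < g x}))) := by
      apply tendsto_measure_iInter_atTop
      · intro n; exact (measurableSet_lt measurable_const hgm).nullMeasurableSet
      · intro n m hnm x hx
        simp only [mem_setOf_eq] at hx ⊢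
        exact lt_of_le_of_lt (by exact_mod_cast hnm) hx
      · refine ⟨0, ?_⟩
        rw [happ 0]
        exact ne_top_of_le_ne_top ENNReal.one_ne_top
          (le_trans (setLIntegral_le_lintegral _ _) hgtot)
    have hempty : (⋂ n : ℕ, {x : Ed d | (n:ℝ) < g x}) = ∅ := by
      ext x
      simp only [mem_iInter, mem_setOf_eq, mem_empty_iff_false, iff_false, not_forall, not_lt]
      obtain ⟨n, hn⟩ := exists_nat_gt (g x)
      exact ⟨n, hn.le⟩
    rw [hempty, measure_empty] at hti
    have hev := hti.eventually_lt_const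
      (show (0:ℝ≥0∞) < ENNReal.ofReal δ by rwa [ENNReal.ofReal_pos])
    rw [eventually_atTop] at hev
    obtain ⟨n₀, hn₀⟩ := hev
    refine ⟨n₀, ?_⟩
    rw [← happ n₀]
    exact (hn₀ n₀ le_rfl).le
  have htail : ∃ n₁ : ℕ, ∫⁻ x in {x : Ed d | (n₁:ℝ) ≤ ‖x‖}, ENNReal.ofReal (g x) ^ p
      ≤ ENNReal.ofReal δ := by
    set μ' := volume.withDensity (fun x => ENNReal.ofReal (g x) ^ p) with hμ'
    have happ : ∀ n : ℕ, μ' {x : Ed d | (n:ℝ) ≤ ‖x‖}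
        = ∫⁻ x in {x : Ed d | (n:ℝ) ≤ ‖x‖}, ENNReal.ofReal (g x) ^ p :=
      fun n => withDensity_apply _ (measurableSet_le measurable_const measurable_norm)
    have hti : Tendsto (fun n : ℕ => μ' {x : Ed d | (n:ℝ) ≤ ‖x‖}) atTop
        (nhds (μ' (⋂ n : ℕ, {x : Ed d | (n:ℝ) ≤ ‖x‖}))) := by
      apply tendsto_measure_iInter_atTop
      · intro n; exact (measurableSet_le measurable_const measurable_norm).nullMeasurableSet
      · intro n m hnm x hx
        simp only [mem_setOf_eq] at hx ⊢
        exact le_trans (by exact_mod_cast hnm) hx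
      · refine ⟨0, ?_⟩
        rw [happ 0]
        exact ne_top_of_le_ne_top ENNReal.one_ne_top
          (le_trans (setLIntegral_le_lintegral _ _) hgtot)
    have hempty : (⋂ n : ℕ, {x : Ed d | (n:ℝ) ≤ ‖x‖}) = ∅ := by
      ext x
      simp only [mem_iInter, mem_setOf_eq, mem_empty_iff_false, iff_false, not_forall, not_le]
      obtain ⟨n, hn⟩ := exists_nat_gt ‖x‖
      exact ⟨n, hn⟩
    rw [hempty, measure_empty] at hti
    have hev := hti.eventually_lt_const
      (show (0:ℝ≥0∞) < ENNReal.ofReal δ by rwa [ENNReal.ofReal_pos])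
    rw [eventually_atTop] at hev
    obtain ⟨n₁, hn₁⟩ := hev
    refine ⟨n₁, ?_⟩
    rw [← happ n₁]
    exact (hn₁ n₁ le_rfl).le
  obtain ⟨n₀, hn₀⟩ := htrunc
  obtain ⟨n₁, hn₁⟩ := htail
  obtain ⟨ρ₀, hρ₀⟩ := hUI δ hδ0
  set ρ : ℝ := max (max ρ₀ (n₀:ℝ)) 1 with hρdef
  have hρ1 : (1:ℝ) ≤ ρ := le_max_right _ _
  have hρpos : (0:ℝ) < ρ := lt_of_lt_of_le one_pos hρ1
  have hρρ₀ : ρ₀ ≤ ρ := le_trans (le_max_left _ _) (le_max_left _ _)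
  have hρn₀ : (n₀:ℝ) ≤ ρ := le_trans (le_max_right _ _) (le_max_left _ _)
  obtain ⟨R', hR'1, hR'⟩ := vB_large (d := d) hp hd (show (0:ℝ) < ρ⁻¹ by positivity)
  set R : ℝ := max R' (n₁:ℝ) with hRdef
  have hRn₁ : (n₁:ℝ) ≤ R := le_max_right _ _
  have hout : ∀ ν (x : Ed d), R ≤ ‖x‖ → fs ν x < ρ⁻¹ := by
    intro ν x hx
    have hR1 : (1:ℝ) ≤ R := le_trans hR'1 (le_max_left _ _)
    have hx0 : x ≠ 0 := by
      intro hcon; rw [hcon, norm_zero] at hx; linarith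
    exact lt_of_le_of_lt (hub ν x hx0) (hR' _ (le_trans (le_max_left _ _) hx))
  have houtg : ∀ x : Ed d, R ≤ ‖x‖ → g x < ρ⁻¹ := by
    intro x hx
    have hR1 : (1:ℝ) ≤ R := le_trans hR'1 (le_max_left _ _)
    have hx0 : x ≠ 0 := by
      intro hcon; rw [hcon, norm_zero] at hx; linarith
    exact lt_of_le_of_lt (hgub x hx0) (hR' _ (le_trans (le_max_left _ _) hx))
  -- truncation operator
  set T : (Ed d → ℝ) → Ed d → ℝ := fun u x => if ‖x‖ < R then min (u x) ρ else 0 with hTdef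
  have hTmeas : ∀ u : Ed d → ℝ, Measurable u → Measurable (T u) := fun u hu =>
    Measurable.ite (measurableSet_lt measurable_norm measurable_const)
      (hu.min measurable_const) measurable_const
  -- pointwise bound for the truncation error
  have hkey : ∀ (u : Ed d → ℝ), (∀ x, 0 ≤ u x) → (∀ x, R ≤ ‖x‖ → u x < ρ⁻¹) →
      ∀ x : Ed d, ENNReal.ofReal |u x - T u x| ^ p ≤
        ({x : Ed d | ρ < u x}.indicator (fun x => ENNReal.ofReal (u x) ^ p) x)
        + ({x : Ed d | R ≤ ‖x‖}.indicator (fun x => ENNReal.ofReal (u x) ^ p) x) := by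
    intro u hu hout' x
    simp only [hTdef]
    by_cases hx : ‖x‖ < R
    · rw [if_pos hx]
      by_cases hρx : ρ < u x
      · have h1 : |u x - min (u x) ρ| = u x - ρ := by
          rw [min_eq_right hρx.le, abs_of_nonneg (by linarith)]
        rw [h1]
        refine le_trans ?_ le_self_add
        rw [indicator_of_mem (show x ∈ {x : Ed d | ρ < u x} from hρx)]
        exact ENNReal.rpow_le_rpow (ENNReal.ofReal_le_ofReal (by linarith)) hp0.le
      · push_neg at hρx
        have h1 : |u x - min (u x) ρ| = 0 := by
          rw [min_eq_left hρx, sub_self, abs_zero]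
        rw [h1]
        simp [ENNReal.zero_rpow_of_pos hp0]
    · rw [if_neg hx]
      push_neg at hx
      rw [sub_zero, abs_of_nonneg (hu x)]
      refine le_trans ?_ le_add_self
      rw [indicator_of_mem (show x ∈ {x : Ed d | R ≤ ‖x‖} from hx)]
  -- truncation error bound in norm
  have hsum : ∀ (u : Ed d → ℝ), Measurable u → (∀ x, 0 ≤ u x) → (∀ x, R ≤ ‖x‖ → u x < ρ⁻¹) →
      (∫⁻ x in {x : Ed d | ρ < u x}, ENNReal.ofReal (u x) ^ p) ≤ ENNReal.ofReal δ →
      (∫⁻ x in {x : Ed d | R ≤ ‖x‖}, ENNReal.ofReal (u x) ^ p) ≤ ENNReal.ofReal δ →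
      eLpNorm (fun x => u x - T u x) (ENNReal.ofReal p) volume ≤ τ := by
    intro u hu hnn' hout' h1 h2
    rw [help]
    have humeas : Measurable (fun x => ENNReal.ofReal (u x) ^ p) :=
      (hu.ennreal_ofReal).pow (measurable_const (a := p))
    have hb : (∫⁻ x, ENNReal.ofReal |u x - T u x| ^ p) ≤ τ ^ p := by
      calc ∫⁻ x, ENNReal.ofReal |u x - T u x| ^ p
          ≤ ∫⁻ x, (({x : Ed d | ρ < u x}.indicator (fun x => ENNReal.ofReal (u x) ^ p) x)
            + ({x : Ed d | R ≤ ‖x‖}.indicator (fun x => ENNReal.ofReal (u x) ^ p) x)) :=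
            lintegral_mono (hkey u hnn' hout')
        _ = (∫⁻ x, {x : Ed d | ρ < u x}.indicator (fun x => ENNReal.ofReal (u x) ^ p) x)
            + ∫⁻ x, {x : Ed d | R ≤ ‖x‖}.indicator (fun x => ENNReal.ofReal (u x) ^ p) x :=
            lintegral_add_left (humeas.indicator (measurableSet_lt measurable_const hu)) _
        _ = (∫⁻ x in {x : Ed d | ρ < u x}, ENNReal.ofReal (u x) ^ p)
            + ∫⁻ x in {x : Ed d | R ≤ ‖x‖}, ENNReal.ofReal (u x) ^ p := by
            rw [lintegral_indicator (measurableSet_lt measurable_const hu),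
              lintegral_indicator (measurableSet_le measurable_const measurable_norm)]
        _ ≤ ENNReal.ofReal δ + ENNReal.ofReal δ := add_le_add h1 h2
        _ ≤ τ ^ p := hδle
    calc (∫⁻ x, ENNReal.ofReal |u x - T u x| ^ p) ^ (1/p)
        ≤ (τ ^ p) ^ (1/p) := ENNReal.rpow_le_rpow hb (by positivity)
      _ = τ := by
          rw [← ENNReal.rpow_mul, mul_one_div, div_self hp0.ne', ENNReal.rpow_one]
  -- the middle term tends to zero
  have hmid : Tendsto (fun n => ∫⁻ x, ENNReal.ofReal |T (fs (φ (ψ n))) x - T g x| ^ p)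
      atTop (nhds 0) := by
    have hdct := tendsto_lintegral_of_dominated_convergence (μ := volume)
      (F := fun n x => ENNReal.ofReal |T (fs (φ (ψ n))) x - T g x| ^ p)
      (f := fun _ => (0:ℝ≥0∞))
      (bound := (ball (0:Ed d) R).indicator (fun _ => ENNReal.ofReal ρ ^ p)) ?_ ?_ ?_ ?_
    · simpa using hdct
    · intro n
      exact ((((hTmeas _ (hmF n)).sub (hTmeas g hgm)).abs).ennreal_ofReal).pow
        (measurable_const (a := p))
    · intro n
      apply Eventually.of_forall
      intro x
      by_cases hx : ‖x‖ < R
      · rw [indicator_of_mem (show x ∈ ball (0:Ed d) R by rwa [mem_ball, dist_zero_right])]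
        apply ENNReal.rpow_le_rpow _ hp0.le
        apply ENNReal.ofReal_le_ofReal
        simp only [hTdef, if_pos hx]
        rw [abs_le]
        constructor
        · have h1 : (0:ℝ) ≤ min (fs (φ (ψ n)) x) ρ := le_min (hnn _ _) hρpos.le
          have h2 : min (g x) ρ ≤ ρ := min_le_right _ _
          linarith
        · have h1 : min (fs (φ (ψ n)) x) ρ ≤ ρ := min_le_right _ _
          have h2 : (0:ℝ) ≤ min (g x) ρ := le_min (hgnn _) hρpos.le
          linarith
      · simp only [hTdef, if_neg hx]
        simp [ENNReal.zero_rpow_of_pos hp0]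
    · rw [lintegral_indicator measurableSet_ball, setLIntegral_const]
      exact ENNReal.mul_ne_top (ENNReal.rpow_ne_top_of_nonneg hp0.le ENNReal.ofReal_ne_top)
        measure_ball_lt_top.ne
    · filter_upwards [hae] with x hx
      by_cases hxR : ‖x‖ < R
      · have h1 : Tendsto (fun n => T (fs (φ (ψ n))) x) atTop (nhds (T g x)) := by
          simp only [hTdef, if_pos hxR]
          exact hx.min tendsto_const_nhds
        have h2 : Tendsto (fun n => T (fs (φ (ψ n))) x - T g x) atTop (nhds 0) := by
          simpa using h1.sub_const (T g x)
        have h3 : Tendsto (fun n => |T (fs (φ (ψ n))) x - T g x|) atTop (nhds 0) := by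
          simpa using h2.abs
        have h4 : Tendsto (fun n => ENNReal.ofReal |T (fs (φ (ψ n))) x - T g x|) atTop
            (nhds 0) := by
          simpa [Function.comp_def] using (ENNReal.continuous_ofReal.tendsto 0).comp h3
        have h5 := ((ENNReal.continuous_rpow_const (y := p)).tendsto (0:ℝ≥0∞)).comp h4
        simpa [Function.comp_def, ENNReal.zero_rpow_of_pos hp0] using h5
      · simp only [hTdef, if_neg hxR]
        simpa [ENNReal.zero_rpow_of_pos hp0] using
          (tendsto_const_nhds : Tendsto (fun _ : ℕ => (0:ℝ≥0∞)) atTop (nhds 0))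
  have hτppos : (0:ℝ≥0∞) < τ ^ p := lt_of_le_of_ne zero_le (Ne.symm hτp0)
  have hmidev : ∀ᶠ n in atTop,
      eLpNorm (fun x => T (fs (φ (ψ n))) x - T g x) (ENNReal.ofReal p) volume ≤ τ := by
    filter_upwards [hmid.eventually_lt_const hτppos] with n hn
    rw [help]
    calc (∫⁻ x, ENNReal.ofReal |T (fs (φ (ψ n))) x - T g x| ^ p) ^ (1/p)
        ≤ (τ ^ p) ^ (1/p) := ENNReal.rpow_le_rpow hn.le (by positivity)
      _ = τ := by
          rw [← ENNReal.rpow_mul, mul_one_div, div_self hp0.ne', ENNReal.rpow_one]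
  -- the UI bound along the subsequence
  have hUIev : ∀ᶠ n in atTop,
      (∫⁻ x in {x : Ed d | ρ < fs (φ (ψ n)) x}, ENNReal.ofReal (fs (φ (ψ n)) x) ^ p)
        ≤ ENNReal.ofReal δ ∧
      (∫⁻ x in {x : Ed d | fs (φ (ψ n)) x < ρ⁻¹}, ENNReal.ofReal (fs (φ (ψ n)) x) ^ p)
        ≤ ENNReal.ofReal δ :=
    ((hφ.comp hψ).tendsto_atTop).eventually (hρ₀ ρ hρρ₀)
  -- g truncation error
  have hgb : eLpNorm (fun x => g x - T g x) (ENNReal.ofReal p) volume ≤ τ := by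
    apply hsum g hgm hgnn houtg
    · refine le_trans (lintegral_mono_set ?_) hn₀
      intro x hx
      simp only [mem_setOf_eq] at hx ⊢
      linarith
    · refine le_trans (lintegral_mono_set ?_) hn₁
      intro x hx
      simp only [mem_setOf_eq] at hx ⊢
      linarith
  -- final assembly
  have hfinal : ∀ᶠ n in atTop,
      eLpNorm (fun x => fs (φ (ψ n)) x - g x) (ENNReal.ofReal p) volume ≤ ε := by
    filter_upwards [hUIev, hmidev] with n hn hmidn
    have hFb : eLpNorm (fun x => fs (φ (ψ n)) x - T (fs (φ (ψ n))) x)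
        (ENNReal.ofReal p) volume ≤ τ := by
      apply hsum _ (hmF n) (hnn _) (fun x hx => hout _ x hx) hn.1
      refine le_trans (lintegral_mono_set ?_) hn.2
      intro x hx
      simp only [mem_setOf_eq] at hx ⊢
      exact hout _ x hx
    have hgb' : eLpNorm (fun x => T g x - g x) (ENNReal.ofReal p) volume ≤ τ := by
      have hneg : (fun x => T g x - g x) = -(fun x => g x - T g x) := by
        funext x
        simp only [Pi.neg_apply]
        ring
      rw [hneg, eLpNorm_neg]
      exact hgb
    have hdecomp : (fun x => fs (φ (ψ n)) x - g x)
        = (fun x => fs (φ (ψ n)) x - T (fs (φ (ψ n))) x)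
          + ((fun x => T (fs (φ (ψ n))) x - T g x) + (fun x => T g x - g x)) := by
      funext x
      simp only [Pi.add_apply]
      ring
    rw [hdecomp]
    have hm1 : AEStronglyMeasurable (fun x => fs (φ (ψ n)) x - T (fs (φ (ψ n))) x) volume :=
      ((hmF n).sub (hTmeas _ (hmF n))).aestronglyMeasurable
    have hm2 : AEStronglyMeasurable (fun x => T (fs (φ (ψ n))) x - T g x) volume :=
      ((hTmeas _ (hmF n)).sub (hTmeas g hgm)).aestronglyMeasurable
    have hm3 : AEStronglyMeasurable (fun x => T g x - g x) volume :=
      ((hTmeas g hgm).sub hgm).aestronglyMeasurable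
    calc eLpNorm ((fun x => fs (φ (ψ n)) x - T (fs (φ (ψ n))) x)
          + ((fun x => T (fs (φ (ψ n))) x - T g x) + (fun x => T g x - g x)))
          (ENNReal.ofReal p) volume
        ≤ eLpNorm (fun x => fs (φ (ψ n)) x - T (fs (φ (ψ n))) x) (ENNReal.ofReal p) volume
          + eLpNorm ((fun x => T (fs (φ (ψ n))) x - T g x) + (fun x => T g x - g x))
            (ENNReal.ofReal p) volume :=
          eLpNorm_add_le hm1 (hm2.add hm3) hP1
      _ ≤ τ + (τ + τ) := by
          apply add_le_add hFb
          exact le_trans (eLpNorm_add_le hm2 hm3 hP1) (add_le_add hmidn hgb')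
      _ = ε' := by
          rw [← add_assoc, hτdef, ENNReal.add_thirds]
      _ ≤ ε := min_le_left _ _
  rw [eventually_atTop] at hfinal
  obtain ⟨N, hN⟩ := hfinal
  exact ⟨N, hN⟩

end RESP

theorem rearranged_extremizing_sequence_precompact
    (p q r : ℝ) (hp : 1 < p) (hq : 1 < q) (hr : 1 < r) (hpqr : 1/p + 1/q + 1/r = 2)
    (d : ℕ) (hd : 1 ≤ d) (γ Γ : ℝ) (hγ : 0 < γ) (hγΓ : γ ≤ Γ)
    (f g h fs gs hs : ℕ → Ed d → ℝ)
    (hfmem : ∀ ν, MemLp (f ν) (ENNReal.ofReal p) volume)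
    (hgmem : ∀ ν, MemLp (g ν) (ENNReal.ofReal q) volume)
    (hhmem : ∀ ν, MemLp (h ν) (ENNReal.ofReal r) volume)
    (hfpos : ∀ ν x, 0 ≤ f ν x) (hgpos : ∀ ν x, 0 ≤ g ν x) (hhpos : ∀ ν x, 0 ≤ h ν x)
    (hfnorm : ∀ ν, nrm p (f ν) = 1) (hgnorm : ∀ ν, nrm q (g ν) = 1)
    (hhnorm : ∀ ν, nrm r (h ν) = 1)
    -- the sequence is extremizing:
    (hextr : Tendsto (fun ν => pairing (conv (f ν) (g ν)) (h ν)) atTop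
      (nhds (Apqr p q r ^ d)))
    -- the sequence is normalized:
    (hnormalized : ∃ Θ Rf : ℝ → ℝ, ∃ η : ℕ → ℝ,
      Tendsto Θ atTop (nhds 0) ∧ Tendsto Rf (nhdsWithin 0 (Ioi 0)) atTop ∧
      (∀ ν, 0 < η ν) ∧ Tendsto η atTop (nhds 0) ∧
      ∀ ν, IsNormalized Θ Rf p (η ν) (f ν) ∧ IsNormalized Θ Rf q (η ν) (g ν) ∧
        IsNormalized Θ Rf r (η ν) (h ν))
    -- fs, gs, hs are the symmetric nonincreasing rearrangements:
    (hfs : ∀ ν, IsRearrangement (f ν) (fs ν)) (hgs : ∀ ν, IsRearrangement (g ν) (gs ν))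
    (hhs : ∀ ν, IsRearrangement (h ν) (hs ν))
    -- the rearrangements take values in [γ,Γ] on the unit sphere:
    (hfsph : ∀ ν, ∀ x : Ed d, ‖x‖ = 1 → fs ν x ∈ Icc γ Γ)
    (hgsph : ∀ ν, ∀ x : Ed d, ‖x‖ = 1 → gs ν x ∈ Icc γ Γ)
    (hhsph : ∀ ν, ∀ x : Ed d, ‖x‖ = 1 → hs ν x ∈ Icc γ Γ) :
    LpPrecompact p fs ∧ LpPrecompact q gs ∧ LpPrecompact r hs := by
  obtain ⟨Θ, Rf, η, hΘ, hRf, hηpos, hη, hnorm⟩ := hnormalized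
  have hcomp : Tendsto (fun ν => Rf (η ν)) atTop atTop :=
    hRf.comp (tendsto_nhdsWithin_iff.2 ⟨hη, Eventually.of_forall fun ν => hηpos ν⟩)
  have main : ∀ (s : ℝ), 1 < s → ∀ (u us : ℕ → Ed d → ℝ),
      (∀ ν, MemLp (u ν) (ENNReal.ofReal s) volume) → (∀ ν x, 0 ≤ u ν x) →
      (∀ ν, nrm s (u ν) = 1) → (∀ ν, IsRearrangement (u ν) (us ν)) →
      (∀ ν, ∀ ρ : ℝ, 0 < ρ → ρ ≤ Rf (η ν) →
        (∫ x in {x : Ed d | ρ < |u ν x|}, |u ν x| ^ s) ≤ Θ ρ ∧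
        (∫ x in {x : Ed d | |u ν x| < ρ⁻¹}, |u ν x| ^ s) ≤ Θ ρ) →
      LpPrecompact s us := by
    intro s hs u us hmem hpos hnorm1 hrs hnrm
    have hsb := fun ν => RESP.fs_bounds hs hd (hmem ν) (hpos ν)
      (by simpa [nrm] using hnorm1 ν) ((hrs ν).1) ((hrs ν).2.1) ((hrs ν).2.2)
    apply RESP.key hs hd us (fun ν => (hrs ν).1) (fun ν => (hrs ν).2.1)
    · exact fun ν => (hsb ν).1
    · exact fun ν t ht => (hsb ν).2.1 t ht
    · intro ε hε
      obtain ⟨ρθ, hρθ⟩ := eventually_atTop.1 (hΘ.eventually_lt_const hε)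
      refine ⟨max ρθ 1, ?_⟩
      intro ρ hρ
      have hρ1 : (1:ℝ) ≤ ρ := le_trans (le_max_right _ _) hρ
      have hρ0 : (0:ℝ) < ρ := by linarith
      have hΘρ : Θ ρ ≤ ε := (hρθ ρ (le_trans (le_max_left _ _) hρ)).le
      filter_upwards [hcomp.eventually_ge_atTop ρ] with ν hν
      obtain ⟨hb1, hb2⟩ := hnrm ν ρ hρ0 hν
      exact ⟨(hsb ν).2.2.1 ρ ε hρ0 (le_trans hb1 hΘρ),
        (hsb ν).2.2.2 ρ⁻¹ ε (by positivity) (le_trans hb2 hΘρ)⟩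
  exact ⟨main p hp f fs hfmem hfpos hfnorm hfs (fun ν => ((hnorm ν).1).2),
    main q hq g gs hgmem hgpos hgnorm hgs (fun ν => ((hnorm ν).2.1).2),
    main r hr h hs hhmem hhpos hhnorm hhs (fun ν => ((hnorm ν).2.2).2)⟩
end
end
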